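/- For every nonnegative integer n and real number ℓ, the sum over i+j=n of binomial(2i-ℓ,i)*binomial(2j+ℓ,j) equals 4^n. -/

import Mathlib

open Finset Polynomial

/-- Generalized binomial coefficient with real upper argument. -/
noncomputable def rchoose (x : ℝ) (k : ℕ) : ℝ :=
  (∏ j ∈ Finset.range k, (x - j)) / (Nat.factorial k : ℝ)

noncomputable def Uaux (n : ℕ) (α β : ℝ) : ℝ :=
  ∑ i ∈ Finset.range (n + 1),
      rchoose (2 * (i : ℝ) - α) i * rchoose (2 * ((n - i : ℕ) : ℝ) + β) (n - i)

lemma rchoose_zero (x : ℝ) : rchoose x 0 = 1 := by simp [rchoose]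

lemma rchoose_succ (x : ℝ) (k : ℕ) :
    rchoose x (k+1) = rchoose x k * (x - k) / (k+1) := by
  have h1 : (Nat.factorial k : ℝ) ≠ 0 := Nat.cast_ne_zero.2 (Nat.factorial_ne_zero k)
  have h2 : ((k:ℝ)+1) ≠ 0 := by positivity
  simp only [rchoose, prod_range_succ, Nat.factorial_succ]
  push_cast
  rw [div_mul_eq_mul_div, div_div, mul_comm ((k:ℝ)+1)]

lemma prod_shift (x : ℝ) (k : ℕ) :
    ∏ t ∈ range (k+1), (x - t) = (∏ t ∈ range k, (x - 1 - t)) * x := by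
  rw [Finset.prod_range_succ']
  simp only [Nat.cast_zero, sub_zero]
  congr 1
  apply Finset.prod_congr rfl
  intro t _
  push_cast
  ring

lemma rchoose_pascal (x : ℝ) (k : ℕ) :
    rchoose x (k+1) = rchoose (x-1) (k+1) + rchoose (x-1) k := by
  have h1 : (Nat.factorial k : ℝ) ≠ 0 := Nat.cast_ne_zero.2 (Nat.factorial_ne_zero k)
  have h2 : ((k:ℝ)+1) ≠ 0 := by positivity
  simp only [rchoose, prod_shift x k, prod_range_succ, Nat.factorial_succ]
  push_cast
  field_simp
  ring

lemma rchoose_pascal' (x y z : ℝ) (k : ℕ) (hy : y = x - 1) (hz : z = x - 1) :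
    rchoose x (k+1) = rchoose y (k+1) + rchoose z k := by
  subst hy hz; exact rchoose_pascal x k

lemma Urec1 (n : ℕ) (α β : ℝ) :
    Uaux (n+1) α β = Uaux (n+1) (α+1) β + Uaux n (α-1) β := by
  unfold Uaux
  rw [Finset.sum_range_succ' (fun i => rchoose (2 * (i : ℝ) - α) i *
        rchoose (2 * (((n+1) - i : ℕ) : ℝ) + β) ((n+1) - i)) (n+1),
      Finset.sum_range_succ' (fun i => rchoose (2 * (i : ℝ) - (α+1)) i *
        rchoose (2 * (((n+1) - i : ℕ) : ℝ) + β) ((n+1) - i)) (n+1)]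
  simp only [Nat.succ_sub_succ, Nat.cast_zero, Nat.sub_zero, mul_zero, zero_sub,
    rchoose_zero, one_mul]
  rw [add_right_comm]
  congr 1
  rw [← Finset.sum_add_distrib]
  apply Finset.sum_congr rfl
  intro i _
  push_cast
  rw [rchoose_pascal' (2 * ((i:ℝ)+1) - α) (2 * ((i:ℝ)+1) - (α+1)) (2 * (i:ℝ) - (α-1)) i
    (by ring) (by ring)]
  ring

lemma Urec2 (n : ℕ) (α β : ℝ) :
    Uaux (n+1) α β = Uaux (n+1) α (β-1) + Uaux n α (β+1) := by
  unfold Uaux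
  rw [Finset.sum_range_succ (fun i => rchoose (2 * (i : ℝ) - α) i *
        rchoose (2 * (((n+1) - i : ℕ) : ℝ) + β) ((n+1) - i)) (n+1),
      Finset.sum_range_succ (fun i => rchoose (2 * (i : ℝ) - α) i *
        rchoose (2 * (((n+1) - i : ℕ) : ℝ) + (β-1)) ((n+1) - i)) (n+1)]
  simp only [Nat.sub_self, Nat.cast_zero, mul_zero, zero_add, rchoose_zero, mul_one]
  rw [add_right_comm]
  congr 1
  rw [← Finset.sum_add_distrib]
  apply Finset.sum_congr rfl
  intro i hi
  have hin : i ≤ n := Nat.lt_succ_iff.mp (Finset.mem_range.mp hi)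
  have hsub : (n+1) - i = (n - i) + 1 := by omega
  rw [hsub]
  push_cast
  rw [rchoose_pascal' (2 * (((n-i:ℕ):ℝ)+1) + β) (2 * (((n-i:ℕ):ℝ)+1) + (β-1))
    (2 * ((n-i:ℕ):ℝ) + (β+1)) (n-i) (by ring) (by ring)]
  ring

/-- Existence of a polynomial representing sums of products of linear factors. -/
lemma exists_poly (N : ℕ) (c : ℕ → ℝ) (m m' : ℕ → ℕ) (a a' : ℕ → ℕ → ℝ) (e e' : ℕ → ℕ → ℝ) :
    ∃ p : Polynomial ℝ, ∀ x : ℝ, p.eval x =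
      ∑ i ∈ range N, c i * ((∏ t ∈ range (m i), (a i t + e i t * x)) *
        (∏ t ∈ range (m' i), (a' i t + e' i t * x))) := by
  refine ⟨∑ i ∈ range N, C (c i) * ((∏ t ∈ range (m i), (C (a i t) + C (e i t) * X)) *
      (∏ t ∈ range (m' i), (C (a' i t) + C (e' i t) * X))), fun x => ?_⟩
  simp [eval_finset_sum, eval_prod]

/-- Two functions represented by polynomials that agree on ℕ agree everywhere. -/
lemma poly_ext {f g : ℝ → ℝ} (p q : Polynomial ℝ)
    (hp : ∀ x, p.eval x = f x) (hq : ∀ x, q.eval x = g x)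
    (h : ∀ k : ℕ, f k = g k) : ∀ x, f x = g x := by
  have hz : p - q = 0 := by
    apply Polynomial.eq_zero_of_infinite_isRoot
    apply Set.infinite_of_injective_forall_mem (f := fun k : ℕ => (k : ℝ)) Nat.cast_injective
    intro k
    simp only [Set.mem_setOf_eq, IsRoot, eval_sub, hp, hq, h k, sub_self]
  intro x
  have := congrArg (Polynomial.eval x) hz
  simpa [sub_eq_zero, hp, hq] using this

/-- `Uaux n ℓ (ℓ+μ)` is represented by a polynomial in `ℓ`. -/
lemma exists_poly_U (n : ℕ) (μ : ℝ) :
    ∃ p : Polynomial ℝ, ∀ x : ℝ, p.eval x = Uaux n x (x + μ) := by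
  obtain ⟨p, hp⟩ := exists_poly (n+1)
    (fun i => ((Nat.factorial i : ℝ))⁻¹ * ((Nat.factorial (n-i) : ℝ))⁻¹)
    (fun i => i) (fun i => n - i)
    (fun i t => 2 * (i:ℝ) - t) (fun i t => 2 * ((n - i : ℕ) : ℝ) + μ - t)
    (fun _ _ => (-1 : ℝ)) (fun _ _ => (1 : ℝ))
  refine ⟨p, fun x => ?_⟩
  rw [hp]
  unfold Uaux
  apply Finset.sum_congr rfl
  intro i _
  simp only [rchoose]
  rw [show (∏ t ∈ range i, (2 * (i:ℝ) - t + (-1) * x))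
      = ∏ t ∈ range i, (2 * (i:ℝ) - x - t) from Finset.prod_congr rfl (fun t _ => by ring),
    show (∏ t ∈ range (n-i), (2 * ((n - i : ℕ) : ℝ) + μ - t + 1 * x))
      = ∏ t ∈ range (n-i), (2 * ((n - i : ℕ) : ℝ) + (x + μ) - t) from
      Finset.prod_congr rfl (fun t _ => by ring)]
  rw [div_mul_div_comm]
  rw [div_eq_mul_inv]

  ring

/-- `Uaux n α β` only depends on `n` and `β - α`. -/
lemma Uconst : ∀ (n : ℕ) (α β γ δ : ℝ), β - α = δ - γ → Uaux n α β = Uaux n γ δ := by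
  intro n
  induction n with
  | zero => intro α β γ δ _; simp [Uaux, rchoose_zero]
  | succ n ih =>
    have shift : ∀ α β : ℝ, Uaux (n+1) (α+1) (β+1) = Uaux (n+1) α β := by
      intro α β
      have h1 := Urec1 n α (β+1)
      have h2 := Urec2 n α (β+1+1)
      rw [show β+1+1-1 = β+1 by ring] at h2
      have h3 : Uaux n (α-1) (β+1) = Uaux n α (β+1+1) :=
        ih (α-1) (β+1) α (β+1+1) (by ring)
      have h4 := Urec2 n α (β+1)
      rw [show β+1-1 = β by ring] at h4
      -- h1 : U(n+1) α (β+1) = U(n+1) (α+1) (β+1) + U n (α-1) (β+1)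
      -- h4 : U(n+1) α (β+1) = U(n+1) α β + U n α (β+2)
      linarith [h1, h4, h3, h2]
    intro α β γ δ h
    obtain ⟨p, hp⟩ := exists_poly_U (n+1) (β - α)
    have hper : ∀ x : ℝ, p.eval (x + 1) = p.eval x := by
      intro x
      rw [hp, hp, show x + 1 + (β - α) = (x + (β - α)) + 1 by ring]
      exact shift x (x + (β - α))
    have hnat : ∀ k : ℕ, p.eval (k : ℝ) = p.eval 0 := by
      intro k
      induction k with
      | zero => norm_num
      | succ k ihk => push_cast; rw [hper]; exact ihk
    have hall : ∀ x : ℝ, p.eval x = p.eval 0 :=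
      poly_ext (f := fun x => p.eval x) (g := fun _ => p.eval 0) p (Polynomial.C (p.eval 0))
        (fun _ => rfl) (fun x => by simp) hnat
    have e1 : Uaux (n+1) α β = p.eval α := by rw [hp]; congr 1; ring
    have e2 : Uaux (n+1) γ δ = p.eval γ := by
      rw [hp]; congr 1; rw [h]; ring
    rw [e1, e2, hall α, hall γ]

lemma prod_cast_desc (m k : ℕ) :
    ∏ t ∈ range k, ((m : ℝ) - t) = (m.descFactorial k : ℝ) := by
  induction k with
  | zero => simp
  | succ k ih =>
    rw [Finset.prod_range_succ, ih, Nat.descFactorial_succ]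
    rcases le_or_gt k m with h | h
    · push_cast [h]; ring
    · rw [Nat.descFactorial_eq_zero_iff_lt.mpr h]
      push_cast
      rw [Nat.sub_eq_zero_of_le h.le]
      simp

lemma rchoose_natCast (m k : ℕ) : rchoose (m : ℝ) k = (m.choose k : ℝ) := by
  have h1 : (Nat.factorial k : ℝ) ≠ 0 := Nat.cast_ne_zero.2 (Nat.factorial_ne_zero k)
  rw [rchoose, prod_cast_desc, Nat.descFactorial_eq_factorial_mul_choose]
  push_cast
  field_simp

/-- A polynomial representing `x ↦ ∑ k rchoose x k * d k`. -/
lemma exists_poly_vdm (n : ℕ) (d : ℕ → ℝ) :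
    ∃ p : Polynomial ℝ, ∀ x : ℝ, p.eval x =
      ∑ k ∈ range (n+1), rchoose x k * d k := by
  obtain ⟨p, hp⟩ := exists_poly (n+1)
    (fun k => ((Nat.factorial k : ℝ))⁻¹ * d k)
    (fun k => k) (fun _ => 0)
    (fun _ t => -(t : ℝ)) (fun _ _ => 0) (fun _ _ => 1) (fun _ _ => 0)
  refine ⟨p, fun x => ?_⟩
  rw [hp]
  apply Finset.sum_congr rfl
  intro k _
  simp only [range_zero, prod_empty, mul_one, rchoose]
  rw [show (∏ t ∈ range k, (-(t:ℝ) + 1 * x)) = ∏ t ∈ range k, (x - t) from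
    Finset.prod_congr rfl (fun t _ => by ring)]
  rw [div_eq_mul_inv]
  ring

/-- A polynomial representing `x ↦ rchoose (x + c) n`. -/
lemma exists_poly_rchoose (n : ℕ) (cst : ℝ) :
    ∃ p : Polynomial ℝ, ∀ x : ℝ, p.eval x = rchoose (x + cst) n := by
  obtain ⟨p, hp⟩ := exists_poly 1
    (fun _ => ((Nat.factorial n : ℝ))⁻¹)
    (fun _ => n) (fun _ => 0)
    (fun _ t => cst - (t : ℝ)) (fun _ _ => 0) (fun _ _ => 1) (fun _ _ => 0)
  refine ⟨p, fun x => ?_⟩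
  rw [hp]
  simp only [range_zero, prod_empty, mul_one, rchoose, Finset.sum_range_one]
  rw [show (∏ t ∈ range n, (cst - (t:ℝ) + 1 * x)) = ∏ t ∈ range n, (x + cst - t) from
    Finset.prod_congr rfl (fun t _ => by ring)]
  rw [div_eq_mul_inv]
  ring

lemma vdm_nat (a b n : ℕ) :
    ∑ k ∈ range (n+1), rchoose (a : ℝ) k * rchoose (b : ℝ) (n-k)
      = rchoose ((a : ℝ) + b) n := by
  have : ((a : ℝ) + b) = ((a + b : ℕ) : ℝ) := by push_cast; ring
  rw [this, rchoose_natCast]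
  rw [Nat.add_choose_eq, Finset.Nat.sum_antidiagonal_eq_sum_range_succ_mk]
  push_cast
  apply Finset.sum_congr rfl
  intro k _
  rw [rchoose_natCast, rchoose_natCast]

lemma rchoose_vandermonde (x y : ℝ) (n : ℕ) :
    ∑ k ∈ range (n+1), rchoose x k * rchoose y (n-k) = rchoose (x + y) n := by
  -- step 1: y a natural number
  have step1 : ∀ (b : ℕ) (x : ℝ),
      ∑ k ∈ range (n+1), rchoose x k * rchoose (b : ℝ) (n-k) = rchoose (x + b) n := by
    intro b
    obtain ⟨p, hp⟩ := exists_poly_vdm n (fun k => rchoose (b : ℝ) (n-k))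
    obtain ⟨q, hq⟩ := exists_poly_rchoose n (b : ℝ)
    exact poly_ext p q hp hq (fun a => vdm_nat a b n)
  -- step 2: general
  have comm : ∀ u : ℝ, ∑ k ∈ range (n+1), rchoose x k * rchoose u (n-k)
      = ∑ k ∈ range (n+1), rchoose u k * rchoose x (n-k) := by
    intro u
    rw [← Finset.sum_range_reflect]
    apply Finset.sum_congr rfl
    intro k hk
    have hk' : k ≤ n := Nat.lt_succ_iff.mp (Finset.mem_range.mp hk)
    have e1 : n + 1 - 1 - k = n - k := by omega
    have e2 : n - (n - k) = k := by omega
    rw [e1, e2]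
    ring
  obtain ⟨p, hp⟩ := exists_poly_vdm n (fun k => rchoose x (n-k))
  obtain ⟨q, hq⟩ := exists_poly_rchoose n x
  have h2 : ∀ u : ℝ, ∑ k ∈ range (n+1), rchoose u k * rchoose x (n-k)
      = rchoose (u + x) n := by
    apply poly_ext p q hp hq
    intro b
    rw [← comm (b:ℝ), step1 b x, add_comm]
  rw [comm y, h2 y, add_comm]

lemma rchoose_neg_one (n : ℕ) : rchoose (-1 : ℝ) n = (-1)^n := by
  induction n with
  | zero => simp [rchoose_zero]
  | succ n ih =>
    rw [rchoose_succ, ih]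
    have : ((n:ℝ)+1) ≠ 0 := by positivity
    field_simp
    ring

lemma rchoose_central (i : ℕ) :
    rchoose (2 * (i : ℝ)) i = (-4 : ℝ)^i * rchoose (-1/2 : ℝ) i := by
  induction i with
  | zero => simp [rchoose_zero]
  | succ i ih =>
    have h1 : ((i:ℝ)+1) ≠ 0 := by positivity
    have hc := Nat.succ_mul_centralBinom_succ i
    have hc' : ((i:ℝ)+1) * ((2*(i+1)).choose (i+1) : ℝ)
        = 2 * (2*(i:ℝ)+1) * ((2*i).choose i : ℝ) := by
      exact_mod_cast congrArg (Nat.cast : ℕ → ℝ) hc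
    have e1 : rchoose (2 * ((i:ℝ)+1)) (i+1) = ((2*(i+1)).choose (i+1) : ℝ) := by
      rw [show 2 * ((i:ℝ)+1) = ((2*(i+1) : ℕ) : ℝ) by push_cast; ring, rchoose_natCast]
    have e2 : rchoose (2 * (i:ℝ)) i = ((2*i).choose i : ℝ) := by
      rw [show 2 * (i:ℝ) = ((2*i : ℕ) : ℝ) by push_cast; ring, rchoose_natCast]
    rw [e2] at ih
    push_cast
    rw [e1, rchoose_succ]
    have expand : ((2*(i+1)).choose (i+1) : ℝ)
        = 2 * (2*(i:ℝ)+1) * ((2*i).choose i : ℝ) / ((i:ℝ)+1) := by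
      field_simp at hc' ⊢
      linarith [hc']
    rw [expand, ih]
    field_simp
    ring

theorem sum_gen_binom_eq_four_pow (n : ℕ) (ℓ : ℝ) :
    ∑ i ∈ Finset.range (n + 1),
      rchoose (2 * (i : ℝ) - ℓ) i * rchoose (2 * ((n - i : ℕ) : ℝ) + ℓ) (n - i)
      = 4 ^ n := by
  have h0 : (∑ i ∈ Finset.range (n + 1),
      rchoose (2 * (i : ℝ) - ℓ) i * rchoose (2 * ((n - i : ℕ) : ℝ) + ℓ) (n - i))
      = Uaux n ℓ ℓ := rfl
  rw [h0, Uconst n ℓ ℓ 0 0 (by ring)]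
  unfold Uaux
  have step : ∀ i ∈ range (n+1),
      rchoose (2 * (i : ℝ) - 0) i * rchoose (2 * ((n - i : ℕ) : ℝ) + 0) (n - i)
      = (-4:ℝ)^n * (rchoose (-1/2 : ℝ) i * rchoose (-1/2 : ℝ) (n - i)) := by
    intro i hi
    have hin : i ≤ n := Nat.lt_succ_iff.mp (Finset.mem_range.mp hi)
    rw [sub_zero, add_zero, rchoose_central i, rchoose_central (n - i)]
    rw [show ((-4:ℝ)^n) = (-4:ℝ)^i * (-4:ℝ)^(n-i) by
      rw [← pow_add]; congr 1; omega]
    ring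
  rw [Finset.sum_congr rfl step, ← Finset.mul_sum, rchoose_vandermonde]
  rw [show (-1/2 : ℝ) + (-1/2) = -1 by ring, rchoose_neg_one, ← mul_pow]
  norm_num
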